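/- arXiv:2302.06653 — 2 statements merged into one kernel-verified Lean document; each statement's English description precedes it below -/
import Mathlib

section
/- If a multigraph G is not Mengerian for time, then any multigraph obtained from G by m-subdividing one of its multiedges is not Mengerian for time. -/
/-- A (finite, loopless) multigraph: a vertex type, an edge type, and an
endpoints function assigning to each edge an unordered pair of distinct vertices. -/
structure Multigraph where
  V : Type
  E : Type
  fintypeV : Fintype V
  decEqV : DecidableEq V
  fintypeE : Fintype E
  decEqE : DecidableEq E
  ends : E → Sym2 V
  loopless : ∀ e, ¬ (ends e).IsDiag

attribute [instance] Multigraph.fintypeV Multigraph.decEqV Multigraph.fintypeE Multigraph.decEqE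

/-- A temporal `s,z`-path in the temporal graph `(G, lam)`: an alternating sequence of
pairwise distinct vertices and edges, starting at `s`, ending at `z`, whose edges appear
at non-decreasing timesteps. -/
structure TPath (G : Multigraph) (lam : G.E → ℕ) (s z : G.V) where
  verts : List G.V
  edges : List G.E
  len_eq : verts.length = edges.length + 1
  head_eq : verts.head? = some s
  last_eq : verts.getLast? = some z
  nodup : verts.Nodup
  ends_eq : ∀ (i : ℕ) (h : i < edges.length),
      G.ends (edges.get ⟨i, h⟩) = s(verts.get ⟨i, by omega⟩, verts.get ⟨i + 1, by omega⟩)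
  mono : List.Chain' (· ≤ ·) (edges.map lam)

/-- The set of timesteps at which a temporal path is active. -/
def TPath.times {G : Multigraph} {lam : G.E → ℕ} {s z : G.V} (P : TPath G lam s z) : Set ℕ :=
  {t | ∃ e ∈ P.edges, lam e = t}

/-- Two temporal `s,z`-paths are snapshot disjoint if they are not both active at any
common timestep. -/
def SnapDisjoint {G : Multigraph} {lam : G.E → ℕ} {s z : G.V} (P Q : TPath G lam s z) : Prop :=
  P.times ∩ Q.times = ∅

/-- A set `S` of timesteps is a snapshot `s,z`-cut if every temporal `s,z`-path uses an
edge active at some timestep in `S`. -/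
def IsSnapCut (G : Multigraph) (lam : G.E → ℕ) (s z : G.V) (S : Set ℕ) : Prop :=
  ∀ P : TPath G lam s z, ∃ e ∈ P.edges, lam e ∈ S

/-- `maxD G lam s z`: the maximum number of pairwise snapshot disjoint temporal `s,z`-paths. -/
noncomputable def maxD (G : Multigraph) (lam : G.E → ℕ) (s z : G.V) : ℕ :=
  sSup {k | ∃ f : Fin k → TPath G lam s z, ∀ i j, i ≠ j → SnapDisjoint (f i) (f j)}

/-- `minC G lam s z`: the minimum size of a snapshot `s,z`-cut. -/
noncomputable def minC (G : Multigraph) (lam : G.E → ℕ) (s z : G.V) : ℕ :=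
  sInf {h | ∃ S : Finset ℕ, S.card = h ∧ IsSnapCut G lam s z ↑S}

/-- A proper timefunction: each edge is active at a positive timestep, and no two parallel
edges are active at the same timestep. -/
def ProperTime (G : Multigraph) (lam : G.E → ℕ) : Prop :=
  (∀ e, 0 < lam e) ∧ ∀ e f, e ≠ f → G.ends e = G.ends f → lam e ≠ lam f

/-- `G` is Mengerian for time: for every proper timefunction and every pair of distinct
vertices, the maximum number of pairwise snapshot disjoint temporal `s,z`-paths equals the
minimum size of a snapshot `s,z`-cut. -/
def Mengerian (G : Multigraph) : Prop :=
  ∀ lam : G.E → ℕ, ProperTime G lam → ∀ s z : G.V, s ≠ z →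
    maxD G lam s z = minC G lam s z

/-- `H` is a subgraph of `G` (up to isomorphism): `H` embeds into `G`. -/
def IsSubgraph (H G : Multigraph) : Prop :=
  ∃ (fv : H.V → G.V) (fe : H.E → G.E),
    Function.Injective fv ∧ Function.Injective fe ∧
    ∀ e, G.ends (fe e) = (H.ends e).map fv

/-- The m-subdivision of the multiedge `xy` of `G`: delete all edges between `x` and `y`,
add a new vertex (`none`), and join it to each of `x` and `y` by as many parallel edges as
there were between `x` and `y`. -/
def Multigraph.msubdiv (G : Multigraph) (x y : G.V) : Multigraph where
  V := Option G.V
  E := {e : G.E // G.ends e ≠ s(x, y)} ⊕ ({e : G.E // G.ends e = s(x, y)} × Bool)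
  fintypeV := inferInstance
  decEqV := inferInstance
  fintypeE := inferInstance
  decEqE := inferInstance
  ends := fun t =>
    match t with
    | .inl e => (G.ends e.1).map some
    | .inr (_, true) => s(some x, (none : Option G.V))
    | .inr (_, false) => s((none : Option G.V), some y)
  loopless := by
    rintro (⟨e, he⟩ | ⟨e, b⟩)
    · simpa [Sym2.isDiag_map (Option.some_injective _)] using G.loopless e
    · cases b <;> simp [Sym2.mk_isDiag_iff]

/-- Isomorphism of multigraphs. -/
def MIso (G H : Multigraph) : Prop :=
  ∃ (fv : G.V ≃ H.V) (fe : G.E ≃ H.E), ∀ e, H.ends (fe e) = (G.ends e).map fv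

/-- `B` is obtained from `A` by m-subdividing one of its multiedges. -/
def SubdivStep (A B : Multigraph) : Prop :=
  ∃ x y : A.V, (∃ e, A.ends e = s(x, y)) ∧ MIso (A.msubdiv x y) B

/-- `H` is an m-topological minor of `G`: some subgraph of `G` can be obtained from `H` by
a sequence of m-subdivisions. -/
def IsMTopMinor (H G : Multigraph) : Prop :=
  ∃ K, Relation.ReflTransGen SubdivStep H K ∧ IsSubgraph K G

/-- The multigraph obtained from `G` by keeping only the edges satisfying `P`. -/
def Multigraph.restrictE (G : Multigraph) (P : G.E → Prop) [DecidablePred P] : Multigraph where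
  V := G.V
  E := {e : G.E // P e}
  fintypeV := G.fintypeV
  decEqV := G.decEqV
  fintypeE := inferInstance
  decEqE := inferInstance
  ends := fun e => G.ends e.1
  loopless := fun e => G.loopless e.1

/-- The underlying simple graph of a multigraph. -/
def Multigraph.simple (G : Multigraph) : SimpleGraph G.V where
  Adj u v := ∃ e, G.ends e = s(u, v)
  symm := by
    constructor
    rintro u v ⟨e, he⟩
    exact ⟨e, by rw [he, Sym2.eq_swap]⟩
  loopless := by
    constructor
    rintro u ⟨e, he⟩
    exact G.loopless e (by rw [he]; exact Sym2.mk_isDiag_iff.2 rfl)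



section Aux

open List

/-- Any temporal path between distinct vertices has at least one edge. -/
lemma TPath.edges_ne_nil {G : Multigraph} {lam : G.E → ℕ} {s z : G.V} (hsz : s ≠ z)
    (P : TPath G lam s z) : P.edges ≠ [] := by
  intro h
  have hl := P.len_eq
  rw [h] at hl
  simp only [List.length_nil, Nat.zero_add] at hl
  obtain ⟨v, hv⟩ := List.length_eq_one_iff.1 hl
  have h1 := P.head_eq
  have h2 := P.last_eq
  rw [hv] at h1 h2
  simp only [List.head?_cons, Option.some.injEq] at h1
  simp only [List.getLast?_singleton, Option.some.injEq] at h2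
  exact hsz (h1.symm.trans h2)

lemma maxDset_bddAbove {G : Multigraph} {lam : G.E → ℕ} {s z : G.V} (hsz : s ≠ z) :
    BddAbove {k | ∃ f : Fin k → TPath G lam s z, ∀ i j, i ≠ j → SnapDisjoint (f i) (f j)} := by
  refine ⟨Fintype.card G.E, ?_⟩
  rintro k ⟨f, hf⟩
  have hex : ∀ i : Fin k, ∃ e, e ∈ (f i).edges := by
    intro i
    have h := TPath.edges_ne_nil hsz (f i)
    cases he : (f i).edges with
    | nil => exact absurd he h
    | cons a l => exact ⟨a, List.mem_cons_self⟩
  choose g hg using hex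
  have hginj : Function.Injective g := by
    intro i j hij
    by_contra hne
    have hd := hf i j hne
    have hmem : lam (g i) ∈ (f i).times ∩ (f j).times :=
      ⟨⟨g i, hg i, rfl⟩, ⟨g j, hg j, by rw [hij]⟩⟩
    rw [hd] at hmem
    exact Set.notMem_empty _ hmem
  simpa using Fintype.card_le_of_injective g hginj

lemma zero_mem_maxDset {G : Multigraph} {lam : G.E → ℕ} {s z : G.V} :
    0 ∈ {k | ∃ f : Fin k → TPath G lam s z, ∀ i j, i ≠ j → SnapDisjoint (f i) (f j)} :=
  ⟨fun i => i.elim0, fun i => i.elim0⟩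

lemma maxD_mono {G G' : Multigraph} {lam : G.E → ℕ} {lam' : G'.E → ℕ}
    {s z : G.V} {s' z' : G'.V} (hsz' : s' ≠ z')
    (F : TPath G lam s z → TPath G' lam' s' z')
    (hF : ∀ P, (F P).times ⊆ P.times) :
    maxD G lam s z ≤ maxD G' lam' s' z' := by
  apply csSup_le_csSup (maxDset_bddAbove hsz') ⟨0, zero_mem_maxDset⟩
  rintro k ⟨f, hf⟩
  refine ⟨fun i => F (f i), fun i j hij => ?_⟩
  have h1 := hf i j hij
  have h2 : (F (f i)).times ∩ (F (f j)).times ⊆ (f i).times ∩ (f j).times :=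
    Set.inter_subset_inter (hF _) (hF _)
  rw [h1] at h2
  exact Set.subset_empty_iff.1 h2

lemma cutset_nonempty {G : Multigraph} {lam : G.E → ℕ} {s z : G.V} (hsz : s ≠ z) :
    {h | ∃ S : Finset ℕ, S.card = h ∧ IsSnapCut G lam s z ↑S}.Nonempty := by
  refine ⟨_, Finset.image lam Finset.univ, rfl, fun P => ?_⟩
  have h := TPath.edges_ne_nil hsz P
  cases he : P.edges with
  | nil => exact absurd he h
  | cons a l =>
    refine ⟨a, List.mem_cons_self, ?_⟩
    simp

lemma minC_mono {G G' : Multigraph} {lam : G.E → ℕ} {lam' : G'.E → ℕ}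
    {s z : G.V} {s' z' : G'.V} (hsz' : s' ≠ z')
    (F : TPath G lam s z → TPath G' lam' s' z')
    (hF : ∀ P, (F P).times ⊆ P.times) :
    minC G lam s z ≤ minC G' lam' s' z' := by
  have hsub : {h | ∃ S : Finset ℕ, S.card = h ∧ IsSnapCut G' lam' s' z' ↑S} ⊆
      {h | ∃ S : Finset ℕ, S.card = h ∧ IsSnapCut G lam s z ↑S} := by
    rintro h ⟨S, hcard, hcut⟩
    refine ⟨S, hcard, fun P => ?_⟩
    obtain ⟨e', he', hmem⟩ := hcut (F P)
    obtain ⟨e, he, heq⟩ := hF P ⟨e', he', rfl⟩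
    exact ⟨e, he, heq ▸ hmem⟩
  have hmem := Nat.sInf_mem (cutset_nonempty hsz' (lam := lam') (s := s') (z := z'))
  exact Nat.sInf_le (hsub hmem)

end Aux


section WalkAux

/-- An auxiliary inductive characterization of the "walk" part of a temporal path. -/
inductive MWalk (G : Multigraph) : G.V → List G.V → List G.E → Prop
  | nil (v : G.V) : MWalk G v [v] []
  | cons {v w : G.V} {vs : List G.V} {es : List G.E} (e : G.E)
      (h : G.ends e = s(v, w)) (hw : MWalk G w (w :: vs) es) :
      MWalk G v (v :: w :: vs) (e :: es)

lemma MWalk.length_eq {G : Multigraph} {v : G.V} {vs : List G.V} {es : List G.E}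
    (hw : MWalk G v vs es) : vs.length = es.length + 1 := by
  induction hw with
  | nil => simp
  | cons e h hw ih => simpa using ih

lemma MWalk.head_eq {G : Multigraph} {v : G.V} {vs : List G.V} {es : List G.E}
    (hw : MWalk G v vs es) : vs.head? = some v := by
  cases hw <;> rfl

lemma MWalk.ne_nil {G : Multigraph} {v : G.V} {vs : List G.V} {es : List G.E}
    (hw : MWalk G v vs es) : vs ≠ [] := by
  cases hw <;> simp

lemma MWalk.ends_eq {G : Multigraph} {v : G.V} {vs : List G.V} {es : List G.E}
    (hw : MWalk G v vs es) : ∀ (i : ℕ) (hi : i < es.length) (h1 : i < vs.length)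
      (h2 : i + 1 < vs.length),
      G.ends (es.get ⟨i, hi⟩) = s(vs.get ⟨i, h1⟩, vs.get ⟨i + 1, h2⟩) := by
  induction hw with
  | nil => intro i hi; simp at hi
  | cons e h hw ih =>
    intro i hi h1 h2
    cases i with
    | zero => simpa using h
    | succ n =>
      have hrel := hw.length_eq
      simp only [List.length_cons] at hi h1 h2 hrel
      simpa using ih n (by omega) (by simp only [List.length_cons]; omega)
        (by simp only [List.length_cons]; omega)

lemma mwalk_of_parts {G : Multigraph} (es : List G.E) : ∀ (vs : List G.V) (v : G.V),
    vs.length = es.length + 1 → vs.head? = some v →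
    (∀ (i : ℕ) (hi : i < es.length) (h1 : i < vs.length) (h2 : i + 1 < vs.length),
      G.ends (es.get ⟨i, hi⟩) = s(vs.get ⟨i, h1⟩, vs.get ⟨i + 1, h2⟩)) →
    MWalk G v vs es := by
  induction es with
  | nil =>
    intro vs v hlen hhead _
    simp only [List.length_nil, Nat.zero_add] at hlen
    obtain ⟨a, rfl⟩ := List.length_eq_one_iff.1 hlen
    simp only [List.head?_cons, Option.some.injEq] at hhead
    subst hhead
    exact .nil _
  | cons e es ih =>
    intro vs v hlen hhead hends
    match vs, hlen with
    | v0 :: v1 :: vs', hlen =>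
      simp only [List.head?_cons, Option.some.injEq] at hhead
      subst hhead
      have hlen' : vs'.length = es.length := by simpa using hlen
      have h0 := hends 0 (by simp) (by simp) (by simp [Nat.succ_lt_succ, hlen'])
      simp only [List.get] at h0
      refine MWalk.cons e h0 (ih (v1 :: vs') v1 (by simpa using hlen) rfl ?_)
      intro i hi h1 h2
      have := hends (i + 1) (by simpa using hi) (by simp only [List.length_cons]; omega)
        (by simp only [List.length_cons]; omega)
      simpa using this

lemma TPath.walk {G : Multigraph} {lam : G.E → ℕ} {s z : G.V} (P : TPath G lam s z) :
    MWalk G s P.verts P.edges := by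
  apply mwalk_of_parts P.edges P.verts s P.len_eq P.head_eq
  intro i hi h1 h2
  exact P.ends_eq i hi

/-- Build a temporal path from a walk. -/
def mkTPath {G : Multigraph} {lam : G.E → ℕ} {s z : G.V} {vs : List G.V} {es : List G.E}
    (hw : MWalk G s vs es) (hlast : vs.getLast? = some z) (hnd : vs.Nodup)
    (hmono : List.Chain' (· ≤ ·) (es.map lam)) : TPath G lam s z where
  verts := vs
  edges := es
  len_eq := hw.length_eq
  head_eq := hw.head_eq
  last_eq := hlast
  nodup := hnd
  ends_eq := fun i hi => hw.ends_eq i hi _ _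
  mono := hmono

@[simp] lemma mkTPath_edges {G : Multigraph} {lam : G.E → ℕ} {s z : G.V} {vs : List G.V}
    {es : List G.E} (hw : MWalk G s vs es) (hlast : vs.getLast? = some z) (hnd : vs.Nodup)
    (hmono : List.Chain' (· ≤ ·) (es.map lam)) : (mkTPath hw hlast hnd hmono).edges = es := rfl

end WalkAux


section Subdiv

/-- The timefunction on the subdivision: both copies of a subdivided edge keep the
original timestep. -/
def lam2 (G : Multigraph) (x y : G.V) (lam : G.E → ℕ) : (G.msubdiv x y).E → ℕ
  | .inl e => lam e.1
  | .inr (e, _) => lam e.1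

@[simp] lemma lam2_inl {G : Multigraph} {x y : G.V} (lam : G.E → ℕ)
    (e : {e : G.E // G.ends e ≠ s(x, y)}) : lam2 G x y lam (Sum.inl e) = lam e.1 := rfl

@[simp] lemma lam2_inr {G : Multigraph} {x y : G.V} (lam : G.E → ℕ)
    (e : {e : G.E // G.ends e = s(x, y)}) (b : Bool) :
    lam2 G x y lam (Sum.inr (e, b)) = lam e.1 := rfl

lemma sym2_map_some_eq {V : Type} {σ : Sym2 V} {a : V} {c : Option V}
    (h : σ.map some = s(some a, c)) : ∃ b, c = some b ∧ σ = s(a, b) := by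
  induction σ using Sym2.ind with
  | _ u v =>
    rw [Sym2.map_pair_eq] at h
    rcases Sym2.eq_iff.1 h with ⟨h1, h2⟩ | ⟨h1, h2⟩
    · exact ⟨v, h2.symm, by rw [Option.some_injective _ h1]⟩
    · exact ⟨u, h1.symm, by rw [Option.some_injective _ h2, Sym2.eq_swap]⟩

lemma mem_filterMap_id {V : Type} {l : List (Option V)} {a : V} :
    a ∈ l.filterMap id ↔ some a ∈ l := by
  simp [List.mem_filterMap]

lemma expand_walk {G : Multigraph} (x y : G.V) (lam : G.E → ℕ)
    {v : G.V} {vs : List G.V} {es : List G.E} (hw : MWalk G v vs es) :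
    ∃ (vs' : List (Option G.V)) (es' : List (G.msubdiv x y).E),
      MWalk (G.msubdiv x y) (some v) vs' es' ∧
      vs'.filterMap id = vs ∧
      vs'.getLast? = vs.getLast?.map some ∧
      ((x ∉ vs ∨ y ∉ vs) → (none : Option G.V) ∉ vs') ∧
      (vs.Nodup → vs'.Nodup) ∧
      (∀ e' ∈ es', ∃ e ∈ es, lam2 G x y lam e' = lam e) ∧
      (es'.map (lam2 G x y lam)).head? = (es.map lam).head? ∧
      (List.Chain' (· ≤ ·) (es.map lam) → List.Chain' (· ≤ ·) (es'.map (lam2 G x y lam))) := by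
  induction hw with
  | nil v =>
    refine ⟨[some v], [], .nil _, by simp, by simp, by simp, by simp, by simp, rfl, by simp⟩
  | @cons v w vt esO e h hw ih =>
    obtain ⟨vs', es', hwalk, hfm, hlast, havoid, hnd, htimes, hhead, hchain⟩ := ih
    obtain ⟨vs'', rfl⟩ : ∃ t, vs' = some w :: t := by
      have hh := hwalk.head_eq
      cases vs' with
      | nil => cases hh
      | cons a t => exact ⟨t, by rw [Option.some.inj hh]⟩
    have hmemv : ∀ u : G.V, some u ∈ some w :: vs'' → u ∈ w :: vt := by
      intro u hu
      rw [← hfm]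
      exact mem_filterMap_id.2 hu
    by_cases heq : G.ends e = s(x, y)
    · -- subdivided edge
      have hvw : s(v, w) = s(x, y) := h.symm.trans heq
      rcases Sym2.eq_iff.1 hvw with ⟨hv, hwy⟩ | ⟨hv, hwy⟩
      · -- v = x, w = y
        subst hv; subst hwy
        refine ⟨some v :: none :: some w :: vs'',
          Sum.inr (⟨e, heq⟩, true) :: Sum.inr (⟨e, heq⟩, false) :: es',
          MWalk.cons _ rfl (MWalk.cons _ rfl hwalk), by simpa using hfm,
          by rw [List.getLast?_cons_cons, List.getLast?_cons_cons, hlast,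
            List.getLast?_cons_cons],
          ?_, ?_, ?_, ?_, ?_⟩
        · intro hx
          exfalso
          rcases hx with hx | hx
          · exact hx (List.mem_cons_self)
          · exact hx (List.mem_cons_of_mem _ (List.mem_cons_self))
        · intro hnod
          have hnt : (w :: vt).Nodup := hnod.of_cons
          have hvnt : v ∉ w :: vt := (List.nodup_cons.1 hnod).1
          have h1 : some v ∉ some w :: vs'' := fun hm => hvnt (hmemv v hm)
          have h2 : (none : Option G.V) ∉ some w :: vs'' := havoid (Or.inl hvnt)
          refine List.nodup_cons.2 ⟨?_, List.nodup_cons.2 ⟨h2, hnd hnt⟩⟩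
          intro hm
          rcases List.mem_cons.1 hm with h' | h'
          · simp at h'
          · exact h1 h'
        · intro e' he'
          rcases List.mem_cons.1 he' with rfl | he'
          · exact ⟨e, List.mem_cons_self, by simp [lam2]⟩
          rcases List.mem_cons.1 he' with rfl | he'
          · exact ⟨e, List.mem_cons_self, by simp [lam2]⟩
          · obtain ⟨f, hf, hlf⟩ := htimes e' he'
            exact ⟨f, List.mem_cons_of_mem _ hf, hlf⟩
        · rfl
        · intro hch
          rw [List.map_cons] at hch
          have h1 := List.isChain_cons.1 hch
          show List.Chain' (· ≤ ·) (lam2 G v w lam (Sum.inr (⟨e, heq⟩, true)) ::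
            lam2 G v w lam (Sum.inr (⟨e, heq⟩, false)) :: es'.map (lam2 G v w lam))
          refine List.isChain_cons.2 ⟨fun b hb => ?_, List.isChain_cons.2
            ⟨fun b hb => h1.1 b (hhead ▸ hb), hchain h1.2⟩⟩
          simp only [List.head?_cons, Option.mem_def, Option.some.injEq] at hb
          subst hb
          simp [lam2]
      · -- v = y, w = x
        subst hv; subst hwy
        refine ⟨some v :: none :: some w :: vs'',
          Sum.inr (⟨e, heq⟩, false) :: Sum.inr (⟨e, heq⟩, true) :: es',
          MWalk.cons _ Sym2.eq_swap (MWalk.cons _ Sym2.eq_swap hwalk), by simpa using hfm,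
          by rw [List.getLast?_cons_cons, List.getLast?_cons_cons, hlast,
            List.getLast?_cons_cons],
          ?_, ?_, ?_, ?_, ?_⟩
        · intro hx
          exfalso
          rcases hx with hx | hx
          · exact hx (List.mem_cons_of_mem _ (List.mem_cons_self))
          · exact hx (List.mem_cons_self)
        · intro hnod
          have hnt : (w :: vt).Nodup := hnod.of_cons
          have hvnt : v ∉ w :: vt := (List.nodup_cons.1 hnod).1
          have h1 : some v ∉ some w :: vs'' := fun hm => hvnt (hmemv v hm)
          have h2 : (none : Option G.V) ∉ some w :: vs'' := havoid (Or.inr hvnt)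
          refine List.nodup_cons.2 ⟨?_, List.nodup_cons.2 ⟨h2, hnd hnt⟩⟩
          intro hm
          rcases List.mem_cons.1 hm with h' | h'
          · simp at h'
          · exact h1 h'
        · intro e' he'
          rcases List.mem_cons.1 he' with rfl | he'
          · exact ⟨e, List.mem_cons_self, by simp [lam2]⟩
          rcases List.mem_cons.1 he' with rfl | he'
          · exact ⟨e, List.mem_cons_self, by simp [lam2]⟩
          · obtain ⟨f, hf, hlf⟩ := htimes e' he'
            exact ⟨f, List.mem_cons_of_mem _ hf, hlf⟩
        · rfl
        · intro hch
          rw [List.map_cons] at hch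
          have h1 := List.isChain_cons.1 hch
          show List.Chain' (· ≤ ·) (lam2 G w v lam (Sum.inr (⟨e, heq⟩, false)) ::
            lam2 G w v lam (Sum.inr (⟨e, heq⟩, true)) :: es'.map (lam2 G w v lam))
          refine List.isChain_cons.2 ⟨fun b hb => ?_, List.isChain_cons.2
            ⟨fun b hb => h1.1 b (hhead ▸ hb), hchain h1.2⟩⟩
          simp only [List.head?_cons, Option.mem_def, Option.some.injEq] at hb
          subst hb
          simp [lam2]
    · -- ordinary edge
      refine ⟨some v :: some w :: vs'', Sum.inl ⟨e, heq⟩ :: es',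
        MWalk.cons _ (by show (G.ends e).map some = _; rw [h, Sym2.map_pair_eq]; rfl) hwalk,
        by simpa using hfm,
        by rw [List.getLast?_cons_cons, hlast, List.getLast?_cons_cons],
        ?_, ?_, ?_, ?_, ?_⟩
      · intro hx
        have hx' : x ∉ w :: vt ∨ y ∉ w :: vt := by
          rcases hx with hx | hx
          · exact Or.inl fun hm => hx (List.mem_cons_of_mem _ hm)
          · exact Or.inr fun hm => hx (List.mem_cons_of_mem _ hm)
        intro hm
        rcases List.mem_cons.1 hm with h' | h'
        · simp at h'
        · exact havoid hx' h'
      · intro hnod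
        have hnt : (w :: vt).Nodup := hnod.of_cons
        have hvnt : v ∉ w :: vt := (List.nodup_cons.1 hnod).1
        exact List.nodup_cons.2 ⟨fun hm => hvnt (hmemv v hm), hnd hnt⟩
      · intro e' he'
        rcases List.mem_cons.1 he' with rfl | he'
        · exact ⟨e, List.mem_cons_self, by simp [lam2]⟩
        · obtain ⟨f, hf, hlf⟩ := htimes e' he'
          exact ⟨f, List.mem_cons_of_mem _ hf, hlf⟩
      · rfl
      · intro hch
        rw [List.map_cons] at hch
        have h1 := List.isChain_cons.1 hch
        show List.Chain' (· ≤ ·) (lam2 G x y lam (Sum.inl ⟨e, heq⟩) :: es'.map (lam2 G x y lam))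
        exact List.isChain_cons.2 ⟨fun b hb => h1.1 b (hhead ▸ hb), hchain h1.2⟩


lemma MWalk.cons'' {G : Multigraph} {v w : G.V} {vs : List G.V} {es : List G.E} {e : G.E}
    (h : G.ends e = s(v, w)) (hw : MWalk G w vs es) : MWalk G v (v :: vs) (e :: es) := by
  cases hw with
  | nil => exact .cons e h (.nil w)
  | cons f hf hw2 => exact .cons e h (.cons f hf hw2)

lemma getLast?_cons_ne_nil {α : Type*} {l : List α} (h : l ≠ []) (a : α) :
    (a :: l).getLast? = l.getLast? := by
  cases l with
  | nil => exact absurd rfl h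
  | cons b t => rw [List.getLast?_cons_cons]

lemma mwalk_inv {G : Multigraph} {x y : G.V} {a : Option G.V} {vs' : List (Option G.V)}
    {es' : List (G.msubdiv x y).E} (h : MWalk (G.msubdiv x y) a vs' es') :
    (vs' = [a] ∧ es' = []) ∨ ∃ (w : Option G.V) (vs2 : List (Option G.V))
      (es2 : List (G.msubdiv x y).E) (e : (G.msubdiv x y).E), vs' = a :: w :: vs2 ∧
      es' = e :: es2 ∧ (G.msubdiv x y).ends e = s(a, w) ∧ MWalk (G.msubdiv x y) w (w :: vs2) es2 := by
  rcases h with _ | ⟨e, he, hw⟩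
  · exact Or.inl ⟨rfl, rfl⟩
  · exact Or.inr ⟨_, _, _, e, rfl, rfl, he, hw⟩

lemma contract_walk {G : Multigraph} (x y : G.V) (lam : G.E → ℕ) :
    ∀ (n : ℕ) (es' : List (G.msubdiv x y).E) (vs' : List (Option G.V)) (v : G.V),
      es'.length ≤ n →
      MWalk (G.msubdiv x y) (some v) vs' es' →
      vs'.Nodup →
      vs'.getLast? ≠ some none →
      ∃ (vs : List G.V) (es : List G.E),
        MWalk G v vs es ∧
        vs = vs'.filterMap id ∧
        (∀ w, vs'.getLast? = some (some w) → vs.getLast? = some w) ∧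
        (∀ e ∈ es, ∃ e' ∈ es', lam2 G x y lam e' = lam e) ∧
        (List.Chain' (· ≤ ·) (es'.map (lam2 G x y lam)) →
          List.Chain' (· ≤ ·) (es.map lam) ∧
          ∀ t ∈ (es.map lam).head?, ∃ t' ∈ (es'.map (lam2 G x y lam)).head?, t' ≤ t) := by
  intro n
  induction n with
  | zero =>
    intro es' vs' v hlen hwalk hnod hlast
    have hes : es' = [] := List.length_eq_zero_iff.1 (Nat.le_zero.1 hlen)
    subst hes
    rcases mwalk_inv hwalk with ⟨rfl, -⟩ | ⟨_, _, _, _, _, h, _⟩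
    · exact ⟨[v], [], .nil v, by simp, by simp, by simp, by simp⟩
    · cases h
  | succ n ih =>
    intro es' vs' v hlen hwalk hnod hlast
    rcases mwalk_inv hwalk with ⟨rfl, rfl⟩ | ⟨w, vs2, es2, e1, rfl, rfl, h1, hw'⟩
    · exact ⟨[v], [], .nil v, by simp, by simp, by simp, by simp⟩
    · cases e1 with
      | inl e =>
        obtain ⟨w', rfl, hends⟩ := sym2_map_some_eq (c := w) h1
        have hlast' : (some w' :: vs2).getLast? ≠ some none := by
          rwa [List.getLast?_cons_cons] at hlast
        obtain ⟨vs, es, hwk, hfm, hlst, htm, hch⟩ :=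
          ih es2 (some w' :: vs2) w' (Nat.le_of_succ_le_succ hlen) hw' hnod.of_cons hlast'
        have hvs_ne : vs ≠ [] := hwk.ne_nil
        refine ⟨v :: vs, e.1 :: es, MWalk.cons'' hends hwk, by simp [hfm], ?_, ?_, ?_⟩
        · intro w0 hw0
          rw [List.getLast?_cons_cons] at hw0
          rw [getLast?_cons_ne_nil hvs_ne]
          exact hlst w0 hw0
        · intro f hf
          rcases List.mem_cons.1 hf with rfl | hf
          · exact ⟨Sum.inl e, List.mem_cons_self, rfl⟩
          · obtain ⟨e', he', hle⟩ := htm f hf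
            exact ⟨e', List.mem_cons_of_mem _ he', hle⟩
        · intro hchain
          change List.Chain' _ (_ :: _) at hchain
          have h2 := List.isChain_cons.1 hchain
          obtain ⟨hc, hhd⟩ := hch h2.2
          constructor
          · rw [List.map_cons]
            refine List.isChain_cons.2 ⟨fun b hb => ?_, hc⟩
            obtain ⟨t', ht', hle⟩ := hhd b hb
            exact le_trans (h2.1 t' ht') hle
          · intro t ht
            simp only [List.map_cons, List.head?_cons, Option.mem_def, Option.some.injEq] at ht ⊢
            exact ⟨_, rfl, by rw [← ht]; rfl⟩
      | inr p =>
        obtain ⟨e, b⟩ := p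
        cases b with
        | true =>
          have hvx : v = x ∧ w = none := by
            rcases Sym2.eq_iff.1 h1 with ⟨ha, hb⟩ | ⟨ha, hb⟩
            · exact ⟨(Option.some_injective _ ha).symm, hb.symm⟩
            · exact absurd hb (by simp)
          obtain ⟨rfl, rfl⟩ := hvx
          rcases mwalk_inv hw' with ⟨hv2, rfl⟩ | ⟨w2, vs3, es3, e2, hv2, rfl, h2, hw''⟩
          · injection hv2 with _ hv2
            subst hv2
            exfalso
            apply hlast
            rw [List.getLast?_cons_cons]
            rfl
          · injection hv2 with _ hv2
            subst hv2
            cases e2 with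
            | inl f =>
              exfalso
              have hmem : (none : Option G.V) ∈ (G.ends f.1).map some := by
                rw [show (G.msubdiv _ _).ends (Sum.inl f) = (G.ends f.1).map some from rfl] at h2
                rw [h2]
                exact Sym2.mem_mk_left _ _
              obtain ⟨u, _, hu⟩ := Sym2.mem_map.1 hmem
              exact Option.some_ne_none u hu
            | inr q =>
              obtain ⟨f, b2⟩ := q
              cases b2 with
              | true =>
                exfalso
                have hw2 : w2 = some v := by
                  rcases Sym2.eq_iff.1 h2 with ⟨ha, hb⟩ | ⟨ha, hb⟩
                  · exact absurd ha (by simp)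
                  · exact ha.symm
                subst hw2
                have := (List.nodup_cons.1 hnod).1
                exact this (by simp)
              | false =>
                have hw2 : w2 = some y := by
                  rcases Sym2.eq_iff.1 h2 with ⟨ha, hb⟩ | ⟨ha, hb⟩
                  · exact hb.symm
                  · exact absurd hb (by simp)
                subst hw2
                have hlast' : (some y :: vs3).getLast? ≠ some none := by
                  rwa [List.getLast?_cons_cons, List.getLast?_cons_cons] at hlast
                have hlen' : es3.length ≤ n := by
                  have := Nat.le_of_succ_le_succ hlen
                  change es3.length + 1 ≤ n at this; omega
                obtain ⟨vs, es, hwk, hfm, hlst, htm, hch⟩ :=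
                  ih es3 (some y :: vs3) y hlen' hw'' hnod.of_cons.of_cons hlast'
                have hvs_ne : vs ≠ [] := hwk.ne_nil
                refine ⟨v :: vs, f.1 :: es, MWalk.cons'' f.2 hwk, by simp [hfm], ?_, ?_, ?_⟩
                · intro w0 hw0
                  rw [List.getLast?_cons_cons, List.getLast?_cons_cons] at hw0
                  rw [getLast?_cons_ne_nil hvs_ne]
                  exact hlst w0 hw0
                · intro g hg
                  rcases List.mem_cons.1 hg with rfl | hg
                  · exact ⟨Sum.inr (f, false), List.mem_cons_of_mem _ List.mem_cons_self, rfl⟩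
                  · obtain ⟨e', he', hle⟩ := htm g hg
                    exact ⟨e', List.mem_cons_of_mem _ (List.mem_cons_of_mem _ he'), hle⟩
                · intro hchain
                  change List.Chain' _ (_ :: _ :: _) at hchain
                  have hc1 : lam2 G v y lam (Sum.inr (e, true)) ≤
                      lam2 G v y lam (Sum.inr (f, false)) :=
                    (List.isChain_cons_cons.1 hchain).1
                  have h2' := List.isChain_cons.1 (List.isChain_cons_cons.1 hchain).2
                  obtain ⟨hc, hhd⟩ := hch h2'.2
                  constructor
                  · rw [List.map_cons]
                    refine List.isChain_cons.2 ⟨fun t ht => ?_, hc⟩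
                    obtain ⟨t', ht', hle⟩ := hhd t ht
                    exact le_trans (h2'.1 t' ht') hle
                  · intro t ht
                    simp only [List.map_cons, List.head?_cons, Option.mem_def,
                      Option.some.injEq] at ht ⊢
                    refine ⟨_, rfl, ?_⟩
                    rw [← ht]
                    exact hc1
        | false =>
          have hvx : v = y ∧ w = none := by
            rcases Sym2.eq_iff.1 h1 with ⟨ha, hb⟩ | ⟨ha, hb⟩
            · exact absurd ha (by simp)
            · exact ⟨(Option.some_injective _ hb).symm, ha.symm⟩
          obtain ⟨rfl, rfl⟩ := hvx
          rcases mwalk_inv hw' with ⟨hv2, rfl⟩ | ⟨w2, vs3, es3, e2, hv2, rfl, h2, hw''⟩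
          · injection hv2 with _ hv2
            subst hv2
            exfalso
            apply hlast
            rw [List.getLast?_cons_cons]
            rfl
          · injection hv2 with _ hv2
            subst hv2
            cases e2 with
            | inl f =>
              exfalso
              have hmem : (none : Option G.V) ∈ (G.ends f.1).map some := by
                rw [show (G.msubdiv _ _).ends (Sum.inl f) = (G.ends f.1).map some from rfl] at h2
                rw [h2]
                exact Sym2.mem_mk_left _ _
              obtain ⟨u, _, hu⟩ := Sym2.mem_map.1 hmem
              exact Option.some_ne_none u hu
            | inr q =>
              obtain ⟨f, b2⟩ := q
              cases b2 with
              | false =>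
                exfalso
                have hw2 : w2 = some v := by
                  rcases Sym2.eq_iff.1 h2 with ⟨ha, hb⟩ | ⟨ha, hb⟩
                  · exact hb.symm
                  · exact absurd hb (by simp)
                subst hw2
                have := (List.nodup_cons.1 hnod).1
                exact this (by simp)
              | true =>
                have hw2 : w2 = some x := by
                  rcases Sym2.eq_iff.1 h2 with ⟨ha, hb⟩ | ⟨ha, hb⟩
                  · exact absurd ha (by simp)
                  · exact ha.symm
                subst hw2
                have hlast' : (some x :: vs3).getLast? ≠ some none := by
                  rwa [List.getLast?_cons_cons, List.getLast?_cons_cons] at hlast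
                have hlen' : es3.length ≤ n := by
                  have := Nat.le_of_succ_le_succ hlen
                  change es3.length + 1 ≤ n at this; omega
                obtain ⟨vs, es, hwk, hfm, hlst, htm, hch⟩ :=
                  ih es3 (some x :: vs3) x hlen' hw'' hnod.of_cons.of_cons hlast'
                have hvs_ne : vs ≠ [] := hwk.ne_nil
                refine ⟨v :: vs, f.1 :: es,
                  MWalk.cons'' (f.2.trans Sym2.eq_swap) hwk, by simp [hfm], ?_, ?_, ?_⟩
                · intro w0 hw0
                  rw [List.getLast?_cons_cons, List.getLast?_cons_cons] at hw0
                  rw [getLast?_cons_ne_nil hvs_ne]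
                  exact hlst w0 hw0
                · intro g hg
                  rcases List.mem_cons.1 hg with rfl | hg
                  · exact ⟨Sum.inr (f, true), List.mem_cons_of_mem _ List.mem_cons_self, rfl⟩
                  · obtain ⟨e', he', hle⟩ := htm g hg
                    exact ⟨e', List.mem_cons_of_mem _ (List.mem_cons_of_mem _ he'), hle⟩
                · intro hchain
                  change List.Chain' _ (_ :: _ :: _) at hchain
                  have hc1 : lam2 G x v lam (Sum.inr (e, false)) ≤
                      lam2 G x v lam (Sum.inr (f, true)) :=
                    (List.isChain_cons_cons.1 hchain).1
                  have h2' := List.isChain_cons.1 (List.isChain_cons_cons.1 hchain).2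
                  obtain ⟨hc, hhd⟩ := hch h2'.2
                  constructor
                  · rw [List.map_cons]
                    refine List.isChain_cons.2 ⟨fun t ht => ?_, hc⟩
                    obtain ⟨t', ht', hle⟩ := hhd t ht
                    exact le_trans (h2'.1 t' ht') hle
                  · intro t ht
                    simp only [List.map_cons, List.head?_cons, Option.mem_def,
                      Option.some.injEq] at ht ⊢
                    refine ⟨_, rfl, ?_⟩
                    rw [← ht]
                    exact hc1


lemma expandPath {G : Multigraph} (x y : G.V) (lam : G.E → ℕ) {s z : G.V}
    (P : TPath G lam s z) :
    ∃ Q : TPath (G.msubdiv x y) (lam2 G x y lam) (some s) (some z), Q.times ⊆ P.times := by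
  obtain ⟨vs', es', hwalk, hfm, hlast, havoid, hnd, htimes, hhead, hchain⟩ :=
    expand_walk x y lam P.walk
  have hlast' : vs'.getLast? = some (some z) := by rw [hlast, P.last_eq]; rfl
  refine ⟨mkTPath hwalk hlast' (hnd P.nodup) (hchain P.mono), ?_⟩
  rintro t ⟨e', he', rfl⟩
  obtain ⟨e, he, hle⟩ := htimes e' he'
  exact ⟨e, he, hle.symm⟩

lemma nodup_filterMap_id {V : Type*} {l : List (Option V)} (h : l.Nodup) :
    (l.filterMap id).Nodup := by
  refine h.filterMap ?_
  intro a a' b h1 h2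
  simp only [Option.mem_def, id] at h1 h2
  rw [h1, h2]

lemma contractPath {G : Multigraph} (x y : G.V) (lam : G.E → ℕ) {s z : G.V}
    (Q : TPath (G.msubdiv x y) (lam2 G x y lam) (some s) (some z)) :
    ∃ P : TPath G lam s z, P.times ⊆ Q.times := by
  have hlast' : Q.verts.getLast? ≠ some none := by
    rw [Q.last_eq]
    exact fun h => by cases h
  obtain ⟨vs, es, hwk, hfm, hlst, htm, hch⟩ :=
    contract_walk x y lam Q.edges.length Q.edges Q.verts s le_rfl Q.walk Q.nodup hlast'
  refine ⟨mkTPath hwk (hlst z Q.last_eq) (hfm ▸ nodup_filterMap_id Q.nodup)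
    ((hch Q.mono).1), ?_⟩
  rintro t ⟨e, he, rfl⟩
  obtain ⟨e', he', hle⟩ := htm e he
  exact ⟨e', he', hle⟩

lemma mwalk_map {G H : Multigraph} (fv : G.V ≃ H.V) (fe : G.E ≃ H.E)
    (hiso : ∀ e, H.ends (fe e) = (G.ends e).map fv) {v : G.V} {vs : List G.V}
    {es : List G.E} (hw : MWalk G v vs es) : MWalk H (fv v) (vs.map fv) (es.map fe) := by
  induction hw with
  | nil v => exact .nil (fv v)
  | @cons v w vt esO e h hw ih =>
    exact MWalk.cons'' (by rw [hiso, h, Sym2.map_pair_eq]) ih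

lemma isoPath {G H : Multigraph} (fv : G.V ≃ H.V) (fe : G.E ≃ H.E)
    (hiso : ∀ e, H.ends (fe e) = (G.ends e).map fv)
    (lamG : G.E → ℕ) (lamH : H.E → ℕ) (hcomp : ∀ e, lamH (fe e) = lamG e)
    {s z : G.V} (P : TPath G lamG s z) :
    ∃ Q : TPath H lamH (fv s) (fv z), Q.times ⊆ P.times := by
  have hmap : (P.edges.map fe).map lamH = P.edges.map lamG := by
    rw [List.map_map]
    exact List.map_congr_left fun e _ => hcomp e
  have hlast' : (P.verts.map fv).getLast? = some (fv z) := by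
    rw [List.getLast?_map, P.last_eq]
    rfl
  refine ⟨mkTPath (mwalk_map fv fe hiso P.walk) hlast' (P.nodup.map fv.injective)
    (by rw [hmap]; exact P.mono), ?_⟩
  rintro t ⟨e', he', rfl⟩
  simp only [mkTPath_edges, List.mem_map] at he'
  obtain ⟨e, he, rfl⟩ := he'
  exact ⟨e, he, (hcomp e).symm⟩

lemma sym2_no_none {V : Type} {σ : Sym2 V} {τ : Sym2 (Option V)}
    (h : σ.map some = τ) (hmem : (none : Option V) ∈ τ) : False := by
  rw [← h] at hmem
  obtain ⟨u, _, hu⟩ := Sym2.mem_map.1 hmem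
  exact Option.some_ne_none u hu

lemma proper_lam2 {G : Multigraph} {lam : G.E → ℕ} (x y : G.V) (hxy : x ≠ y)
    (hp : ProperTime G lam) : ProperTime (G.msubdiv x y) (lam2 G x y lam) := by
  constructor
  · rintro (e | ⟨e, b⟩)
    · exact hp.1 e.1
    · exact hp.1 e.1
  · rintro (e | ⟨e, b⟩) (f | ⟨f, b'⟩) hne hends
    · refine hp.2 e.1 f.1 (fun h => hne (congrArg Sum.inl (Subtype.ext h))) ?_
      exact Sym2.map.injective (Option.some_injective _) hends
    · exfalso
      cases b' with
      | true => exact sym2_no_none hends (Sym2.mem_mk_right _ _)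
      | false => exact sym2_no_none hends (Sym2.mem_mk_left _ _)
    · exfalso
      cases b with
      | true => exact sym2_no_none hends.symm (Sym2.mem_mk_right _ _)
      | false => exact sym2_no_none hends.symm (Sym2.mem_mk_left _ _)
    · by_cases hbb : b = b'
      · subst hbb
        have hef : e ≠ f := by
          intro h
          exact hne (by rw [h])
        refine hp.2 e.1 f.1 (fun h => hef (Subtype.ext h)) (e.2.trans f.2.symm)
      · exfalso
        cases b with
        | true =>
          cases b' with
          | true => exact hbb rfl
          | false =>
            rcases Sym2.eq_iff.1 hends with ⟨ha, hb⟩ | ⟨ha, hb⟩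
            · exact Option.some_ne_none x ha
            · exact hxy (Option.some_injective _ ha)
        | false =>
          cases b' with
          | false => exact hbb rfl
          | true =>
            rcases Sym2.eq_iff.1 hends with ⟨ha, hb⟩ | ⟨ha, hb⟩
            · exact Option.some_ne_none y hb
            · exact hxy (Option.some_injective _ hb).symm

end Subdiv

/-- if `G` is not Mengerian for time, then any multigraph obtained from `G`
by m-subdividing one of its multiedges is not Mengerian for time. -/
theorem stmt1 (G H : Multigraph) (hstep : SubdivStep G H) (hG : ¬ Mengerian G) :
    ¬ Mengerian H := by
  intro hMeng
  apply hG
  obtain ⟨x, y, ⟨e0, he0⟩, fv, fe, hiso⟩ := hstep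
  have hxy : x ≠ y := by
    intro h
    subst h
    exact G.loopless e0 (by rw [he0]; exact Sym2.mk_isDiag_iff.2 rfl)
  intro lam hproper s z hsz
  have hiso' : ∀ e', (G.msubdiv x y).ends (fe.symm e') = (H.ends e').map fv.symm := by
    intro e'
    have h := hiso (fe.symm e')
    rw [Equiv.apply_symm_apply] at h
    rw [h, Sym2.map_map]
    simp
  have hcomp : ∀ e, (fun e' => lam2 G x y lam (fe.symm e')) (fe e) = lam2 G x y lam e := by
    intro e; simp
  have hcomp' : ∀ e', lam2 G x y lam (fe.symm e') =
      (fun e' => lam2 G x y lam (fe.symm e')) e' := fun _ => rfl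
  have hproperM : ProperTime (G.msubdiv x y) (lam2 G x y lam) := proper_lam2 x y hxy hproper
  have hproperH : ProperTime H (fun e' => lam2 G x y lam (fe.symm e')) := by
    constructor
    · intro e'; exact hproperM.1 (fe.symm e')
    · intro e' f' hne hends
      refine hproperM.2 (fe.symm e') (fe.symm f')
        (fun h => hne (by simpa using congrArg fe h)) ?_
      rw [hiso' e', hiso' f', hends]
  have hszM : (some s : (G.msubdiv x y).V) ≠ some z := fun h => hsz (Option.some_injective _ h)
  have hszH : fv (some s) ≠ fv (some z) := fun h => hszM (fv.injective h)
  choose Fex hFex using fun P : TPath G lam s z => expandPath x y lam P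
  choose Fco hFco using
    fun Q : TPath (G.msubdiv x y) (lam2 G x y lam) (some s) (some z) => contractPath x y lam Q
  choose Fi1 hFi1 using
    fun P : TPath (G.msubdiv x y) (lam2 G x y lam) (some s) (some z) =>
      isoPath fv fe hiso (lam2 G x y lam) (fun e' => lam2 G x y lam (fe.symm e')) hcomp P
  have hback := fun Q : TPath H (fun e' => lam2 G x y lam (fe.symm e')) (fv (some s)) (fv (some z)) =>
    isoPath fv.symm fe.symm hiso' (fun e' => lam2 G x y lam (fe.symm e')) (lam2 G x y lam) hcomp' Q
  rw [Equiv.symm_apply_apply fv (some s), Equiv.symm_apply_apply fv (some z)] at hback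
  choose Fi2 hFi2 using hback
  have h1 : maxD G lam s z = maxD (G.msubdiv x y) (lam2 G x y lam) (some s) (some z) :=
    le_antisymm (maxD_mono hszM Fex hFex) (maxD_mono hsz Fco hFco)
  have h2 : maxD (G.msubdiv x y) (lam2 G x y lam) (some s) (some z) =
      maxD H (fun e' => lam2 G x y lam (fe.symm e')) (fv (some s)) (fv (some z)) :=
    le_antisymm (maxD_mono hszH Fi1 hFi1) (maxD_mono hszM Fi2 hFi2)
  have h3 : minC G lam s z = minC (G.msubdiv x y) (lam2 G x y lam) (some s) (some z) :=
    le_antisymm (minC_mono hszM Fex hFex) (minC_mono hsz Fco hFco)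
  have h4 : minC (G.msubdiv x y) (lam2 G x y lam) (some s) (some z) =
      minC H (fun e' => lam2 G x y lam (fe.symm e')) (fv (some s)) (fv (some z)) :=
    le_antisymm (minC_mono hszH Fi1 hFi1) (minC_mono hszM Fi2 hFi2)
  rw [h1, h2, h3, h4]
  exact hMeng _ hproperH _ _ hszH
end

section
/- Let G be a multigraph, let xy be a multiedge of G whose set of parallel edges is D, and let H be obtained from G by m-subdividing xy, with new vertex v and with D_x and D_y the sets of parallel edges between x,v and between v,y respectively (|D_x| = |D_y| = |D|). Let λ be a timefunction on G and let λ′ be any timefunction on H with λ′(e) = λ(e) for every e ∈ E(G)∖D and with label sets λ′(D_x) = λ′(D_y) = λ(D). Then for every pair of distinct vertices s,z ∈ V(G), maxD(G,λ,s,z) = maxD(H,λ′,s,z) and minC(G,λ,s,z) = minC(H,λ′,s,z). -/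
section Helpers

variable {G : Multigraph} {lam : G.E → ℕ} {s z : G.V}

lemma tpath_mk' {n : ℕ} (v : Fin (n+1) → G.V) (e : Fin n → G.E)
    (hinj : Function.Injective v) (h0 : v 0 = s) (hl : v (Fin.last n) = z)
    (hends : ∀ i : Fin n, G.ends (e i) = s(v i.castSucc, v i.succ))
    (hmono : ∀ i j : Fin n, i ≤ j → lam (e i) ≤ lam (e j)) :
    ∃ P : TPath G lam s z, P.times = {t | ∃ i, lam (e i) = t} := by
  refine ⟨⟨List.ofFn v, List.ofFn e, by simp, ?_, ?_, ?_, ?_, ?_⟩, ?_⟩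
  · rw [List.ofFn_succ]
    simpa using h0
  · rw [List.getLast?_eq_getElem?]
    simp only [List.length_ofFn, Nat.add_sub_cancel, List.getElem?_ofFn]
    simp
    exact hl
  · exact (List.nodup_ofFn).2 hinj
  · intro i h
    simp only [List.get_eq_getElem, List.getElem_ofFn]
    have := hends ⟨i, by simpa using h⟩
    convert this using 2 <;> rfl
  · rw [List.map_ofFn, List.Chain', List.isChain_iff_getElem]
    intro i h
    simp only [List.get_eq_getElem, List.getElem_ofFn, Function.comp]
    simp only [List.length_ofFn] at h
    exact hmono ⟨i, by omega⟩ ⟨i+1, by omega⟩ (by exact Fin.mk_le_mk.2 (by omega))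
  · ext t
    simp only [TPath.times, List.mem_ofFn, Set.mem_setOf_eq]
    constructor
    · rintro ⟨_, ⟨i, rfl⟩, h⟩; exact ⟨i, h⟩
    · rintro ⟨i, h⟩; exact ⟨e i, ⟨i, rfl⟩, h⟩

end Helpers
section Spec
variable {G : Multigraph} {lam : G.E → ℕ} {s z : G.V}

lemma tpath_spec (P : TPath G lam s z) :
    ∃ (n : ℕ) (v : Fin (n+1) → G.V) (e : Fin n → G.E),
      Function.Injective v ∧ v 0 = s ∧ v (Fin.last n) = z ∧
      (∀ i : Fin n, G.ends (e i) = s(v i.castSucc, v i.succ)) ∧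
      (∀ i j : Fin n, i ≤ j → lam (e i) ≤ lam (e j)) ∧
      P.times = {t | ∃ i, lam (e i) = t} := by
  obtain ⟨V, E, hlen, hhead, hlast, hnd, hee, hm⟩ := P
  refine ⟨E.length, fun i => V.get (Fin.cast hlen.symm i), fun i => E.get i,
    ?_, ?_, ?_, ?_, ?_, ?_⟩
  · intro a b hab
    have := (List.nodup_iff_injective_get).1 hnd hab
    exact Fin.ext (congrArg Fin.val this : _)
  · have hne : V ≠ [] := by rintro rfl; simp at hhead
    rw [List.head?_eq_head hne] at hhead
    have : V.head hne = V.get ⟨0, by omega⟩ := by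
      cases V with
      | nil => exact absurd rfl hne
      | cons a l => rfl
    rw [this] at hhead
    exact Option.some_injective _ (by simpa using congrArg some hhead)
  · have hne : V ≠ [] := by rintro rfl; simp at hhead
    rw [List.getLast?_eq_getLast hne] at hlast
    have : V.getLast hne = V.get ⟨V.length - 1, by cases V; exact absurd rfl hne; simp⟩ :=
      List.getLast_eq_getElem _
    rw [this] at hlast
    have h2 : (Fin.cast hlen.symm (Fin.last E.length)) = (⟨V.length - 1, by cases V; exact absurd rfl hne; simp⟩ : Fin V.length) := by
      apply Fin.ext; simp [hlen]
    show V.get (Fin.cast hlen.symm (Fin.last E.length)) = z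
    rw [h2]
    exact Option.some_injective _ hlast
  · intro i
    exact hee i.1 i.2
  · intro i j hij
    rcases eq_or_lt_of_le hij with rfl | hij
    · exact le_refl _
    · have hc := List.isChain_iff_pairwise.1 (by exact hm)
      have := (List.pairwise_iff_get.1 hc) ⟨i.1, by simpa using i.2⟩ ⟨j.1, by simpa using j.2⟩ hij
      simpa using this
  · ext t
    simp only [TPath.times, Set.mem_setOf_eq]
    constructor
    · rintro ⟨e, he, rfl⟩
      obtain ⟨i, hi⟩ := List.get_of_mem he
      exact ⟨⟨i, i.2⟩, by rw [← hi]⟩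
    · rintro ⟨i, rfl⟩
      exact ⟨E.get i, by apply List.get_mem, rfl⟩

end Spec
section Glue
variable {G : Multigraph} {lam : G.E → ℕ} {s z : G.V}

lemma times_nonempty (hsz : s ≠ z) (P : TPath G lam s z) : P.times.Nonempty := by
  match hE : P.edges with
  | e :: l => exact ⟨lam e, e, by rw [hE]; exact List.mem_cons_self, rfl⟩
  | [] =>
    exfalso
    have h1 : P.verts.length = 1 := by have := P.len_eq; rw [hE] at this; simpa using this
    obtain ⟨a, ha⟩ := List.length_eq_one_iff.1 h1
    have h2 := P.head_eq
    have h3 := P.last_eq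
    rw [ha] at h2 h3
    simp at h2 h3
    exact hsz (h2.symm.trans h3)

lemma times_mem_image (P : TPath G lam s z) {t : ℕ} (ht : t ∈ P.times) :
    t ∈ Finset.image lam Finset.univ := by
  obtain ⟨e, _, rfl⟩ := ht
  exact Finset.mem_image.2 ⟨e, Finset.mem_univ _, rfl⟩

lemma bdd_maxD (hsz : s ≠ z) :
    BddAbove {k | ∃ f : Fin k → TPath G lam s z, ∀ i j, i ≠ j → SnapDisjoint (f i) (f j)} := by
  refine ⟨(Finset.image lam Finset.univ).card, ?_⟩
  rintro k ⟨f, hf⟩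
  classical
  choose t ht using fun i => times_nonempty hsz (f i)
  have hinj : Function.Injective t := by
    intro i j hij
    by_contra hne
    have hd := hf i j hne
    rw [SnapDisjoint] at hd
    have : t i ∈ (f i).times ∩ (f j).times := ⟨ht i, hij ▸ ht j⟩
    rw [hd] at this
    exact this
  calc k = (Finset.univ : Finset (Fin k)).card := by simp
    _ ≤ _ := Finset.card_le_card_of_injOn t
        (fun i _ => times_mem_image (f i) (ht i)) (fun a _ b _ h => hinj h)

lemma transfer_le {H : Multigraph} {mu : H.E → ℕ} {s' z' : H.V}
    (hsz : s ≠ z) (hsz' : s' ≠ z')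
    (h : ∀ P : TPath G lam s z, ∃ Q : TPath H mu s' z', Q.times ⊆ P.times) :
    maxD G lam s z ≤ maxD H mu s' z' ∧ minC G lam s z ≤ minC H mu s' z' := by
  classical
  choose F hF using h
  constructor
  · apply csSup_le_csSup (bdd_maxD hsz')
    · exact ⟨0, fun i => i.elim0, fun i => i.elim0⟩
    · rintro k ⟨f, hf⟩
      refine ⟨fun i => F (f i), fun i j hij => ?_⟩
      have := hf i j hij
      rw [SnapDisjoint, ← Set.subset_empty_iff] at this ⊢
      exact subset_trans (Set.inter_subset_inter (hF (f i)) (hF (f j))) this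
  · -- every H-cut is a G-cut
    have hcut : ∀ S : Set ℕ, IsSnapCut H mu s' z' S → IsSnapCut G lam s z S := by
      intro S hS P
      obtain ⟨e, he, heS⟩ := hS (F P)
      have : mu e ∈ (F P).times := ⟨e, he, rfl⟩
      obtain ⟨e', he', he'eq⟩ := hF P this
      exact ⟨e', he', he'eq ▸ heS⟩
    have hne : {h | ∃ S : Finset ℕ, S.card = h ∧ IsSnapCut H mu s' z' ↑S}.Nonempty := by
      refine ⟨_, Finset.image mu Finset.univ, rfl, fun P => ?_⟩
      obtain ⟨t, ht⟩ := times_nonempty hsz' P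
      obtain ⟨e, he, rfl⟩ := ht
      exact ⟨e, he, Finset.mem_coe.2 (Finset.mem_image.2 ⟨e, Finset.mem_univ _, rfl⟩)⟩
    have hmem := Nat.sInf_mem hne
    obtain ⟨S, hcard, hS⟩ := hmem
    exact Nat.sInf_le ⟨S, hcard, hcut _ hS⟩

end Glue
section Transfer
variable {G : Multigraph} {x y : G.V} {lam : G.E → ℕ} {lam' : (G.msubdiv x y).E → ℕ}

lemma transferB
    (hkeep : ∀ (e : G.E) (h : G.ends e ≠ s(x, y)), lam' (Sum.inl ⟨e, h⟩) = lam e)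
    (hD : ∀ b : Bool,
      Set.range (fun d : {e : G.E // G.ends e = s(x, y)} => lam' (Sum.inr (d, b)))
        = Set.range (fun d : {e : G.E // G.ends e = s(x, y)} => lam d.1))
    (s z : G.V) (P : TPath G lam s z) :
    ∃ Q : TPath (G.msubdiv x y) lam' (some s) (some z), Q.times ⊆ P.times := by
  classical
  obtain ⟨n, v, e, hinj, h0, hl, hends, hmono, htimes⟩ := tpath_spec P
  by_cases hDe : ∃ i : Fin n, G.ends (e i) = s(x, y)
  · obtain ⟨i0, hi0⟩ := hDe
    have hin : i0.1 < n := i0.2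
    set V : ℕ → G.V := fun i => v ⟨min i n, by omega⟩ with hV
    have hVeq : ∀ (i : ℕ) (h : i < n+1), V i = v ⟨i, h⟩ := by
      intro i h; simp only [hV]; congr 1; exact Fin.ext (by simp; omega)
    have hVinj : ∀ a b : ℕ, a ≤ n → b ≤ n → V a = V b → a = b := by
      intro a b ha hb hab
      rw [hVeq a (by omega), hVeq b (by omega)] at hab
      simpa using congrArg Fin.val (hinj hab)
    have hpair : (v i0.castSucc = x ∧ v i0.succ = y) ∨ (v i0.castSucc = y ∧ v i0.succ = x) :=
      Sym2.eq_iff.1 ((hends i0).symm.trans hi0)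
    obtain ⟨d1, hd1⟩ : ∃ d : {e : G.E // G.ends e = s(x,y)},
        lam' (Sum.inr (d, true)) = lam (e i0) := by
      have : lam (e i0) ∈ Set.range (fun d : {e : G.E // G.ends e = s(x, y)} => lam d.1) :=
        ⟨⟨e i0, hi0⟩, rfl⟩
      rw [← hD true] at this; exact this
    obtain ⟨d2, hd2⟩ : ∃ d : {e : G.E // G.ends e = s(x,y)},
        lam' (Sum.inr (d, false)) = lam (e i0) := by
      have : lam (e i0) ∈ Set.range (fun d : {e : G.E // G.ends e = s(x, y)} => lam d.1) :=
        ⟨⟨e i0, hi0⟩, rfl⟩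
      rw [← hD false] at this; exact this
    obtain ⟨m1, m2, hm1, hm2, hlam1, hlam2⟩ :
        ∃ m1 m2 : (G.msubdiv x y).E,
          (G.msubdiv x y).ends m1 = s(some (v i0.castSucc), none) ∧
          (G.msubdiv x y).ends m2 = s(none, some (v i0.succ)) ∧
          lam' m1 = lam (e i0) ∧ lam' m2 = lam (e i0) := by
      rcases hpair with ⟨hx1, hy1⟩ | ⟨hy1, hx1⟩
      · exact ⟨.inr (d1, true), .inr (d2, false),
          by show s(some x, none) = _; rw [hx1],
          by show s(none, some y) = _; rw [hy1], hd1, hd2⟩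
      · exact ⟨.inr (d2, false), .inr (d1, true),
          by show s(none, some y) = _; rw [hy1, Sym2.eq_swap],
          by show s(some x, none) = _; rw [hx1, Sym2.eq_swap], hd2, hd1⟩
    have hne : ∀ k : Fin n, k ≠ i0 → G.ends (e k) ≠ s(x, y) := by
      intro k hk hcon
      have h2 : s(v k.castSucc, v k.succ) = s(v i0.castSucc, v i0.succ) := by
        rw [← hends k, ← hends i0, hcon, hi0]
      rcases Sym2.eq_iff.1 h2 with ⟨ha, hb⟩ | ⟨ha, hb⟩
      · refine hk ?_
        have h3 := congrArg Fin.val (hinj ha)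
        simp only [Fin.coe_castSucc] at h3
        exact Fin.ext h3
      · have h3 := congrArg Fin.val (hinj ha)
        have h4 := congrArg Fin.val (hinj hb)
        simp only [Fin.coe_castSucc, Fin.val_succ] at h3 h4
        omega
    set E : ℕ → G.E := fun i => e ⟨min i (n-1), by omega⟩ with hE
    have hEeq : ∀ (i : ℕ) (h : i < n), E i = e ⟨i, h⟩ := by
      intro i h; simp only [hE]; congr 1; exact Fin.ext (by simp; omega)
    have hneE : ∀ k : ℕ, (h : k < n) → k ≠ i0.1 → G.ends (E k) ≠ s(x, y) := by
      intro k hk hki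
      rw [hEeq k hk]; exact hne ⟨k, hk⟩ (by simp only [ne_eq, Fin.ext_iff]; omega)
    have hEnds : ∀ (k : ℕ) (h : k < n), G.ends (E k) = s(V k, V (k+1)) := by
      intro k h
      rw [hEeq k h, hVeq k (by omega), hVeq (k+1) (by omega)]
      exact hends ⟨k, h⟩
    have hmono' : ∀ a b : ℕ, a ≤ b → (hb : b < n) → lam (E a) ≤ lam (E b) := by
      intro a b hab hb
      rw [hEeq a (by omega), hEeq b hb]
      exact hmono _ _ (by rw [Fin.mk_le_mk]; exact hab)
    set v' : Fin (n+2) → Option G.V := fun j =>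
      if j.1 ≤ i0.1 then some (V j.1)
      else if j.1 = i0.1 + 1 then none
      else some (V (j.1 - 1)) with hv'
    set e' : Fin (n+1) → (G.msubdiv x y).E := fun j =>
      if h : j.1 < i0.1 then .inl ⟨E j.1, hneE j.1 (by omega) (by omega)⟩
      else if h2 : j.1 = i0.1 then m1
      else if h3 : j.1 = i0.1 + 1 then m2
      else .inl ⟨E (j.1 - 1), hneE (j.1-1) (by have := j.isLt; omega) (by omega)⟩ with he'
    have hv'A : ∀ j : Fin (n+2), j.1 ≤ i0.1 → v' j = some (V j.1) := by
      intro j hj; simp only [hv']; rw [if_pos hj]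
    have hv'B : ∀ j : Fin (n+2), j.1 = i0.1 + 1 → v' j = none := by
      intro j hj; simp only [hv']; rw [if_neg (by omega), if_pos hj]
    have hv'C : ∀ j : Fin (n+2), i0.1 + 1 < j.1 → v' j = some (V (j.1 - 1)) := by
      intro j hj; simp only [hv']; rw [if_neg (by omega), if_neg (by omega)]
    have hlam_le : ∀ j : Fin (n+1), j.1 ≤ i0.1 → lam' (e' j) = lam (E j.1) := by
      intro j hj; simp only [he']
      rcases lt_or_eq_of_le hj with h | h
      · erw [dif_pos h]; exact hkeep _ _
      · erw [dif_neg (by omega), dif_pos h, hlam1, h, hEeq i0.1 hin]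
    have hlam_gt : ∀ j : Fin (n+1), i0.1 < j.1 → lam' (e' j) = lam (E (j.1 - 1)) := by
      intro j hj; simp only [he']
      by_cases h : j.1 = i0.1 + 1
      · erw [dif_neg (by omega), dif_neg (by omega), dif_pos h, hlam2,
          show j.1 - 1 = i0.1 by omega, hEeq i0.1 hin]
      · erw [dif_neg (by omega), dif_neg (by omega), dif_neg h]; exact hkeep _ _
    obtain ⟨Q, hQ⟩ := tpath_mk' (lam := lam') (s := (some s : Option G.V)) (z := (some z : Option G.V)) v' e'
      (by -- injectivity
        intro a b hab
        have ha2 := a.isLt; have hb2 := b.isLt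
        simp only [hv'] at hab
        split_ifs at hab <;>
          first
          | (exact Fin.ext (by omega))
          | (exact absurd hab (by simp))
          | (exact absurd hab.symm (by simp))
          | (injection hab with hab;
             exact Fin.ext (by have := hVinj _ _ (by omega) (by omega) hab; omega)))
      (by rw [hv'A 0 (by simp)]
          have h00 : V ((0 : Fin (n+2)) : ℕ) = s := by
            simp only [Fin.val_zero]
            rw [hVeq 0 (by omega)]; exact h0
          rw [h00])
      (by rw [hv'C (Fin.last (n+1)) (by simp)]
          have hnn : V ((Fin.last (n+1) : Fin (n+2)) - 1 : ℕ) = z := by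
            simp only [Fin.val_last, Nat.add_sub_cancel]
            rw [hVeq n (by omega)]; exact hl
          rw [hnn])
      (by -- ends
        intro j
        have hjlt := j.isLt
        rcases lt_or_ge j.1 i0.1 with h1 | h1
        · have he : e' j = .inl ⟨E j.1, hneE j.1 (by omega) (by omega)⟩ := by
            simp only [he']; erw [dif_pos h1]
          rw [he]
          show (G.ends (E j.1)).map some = _
          rw [hEnds j.1 (by omega), Sym2.map_pair_eq,
            hv'A j.castSucc (by simp only [Fin.coe_castSucc]; omega),
            hv'A j.succ (by simp only [Fin.val_succ]; omega)]
          simp only [Fin.coe_castSucc, Fin.val_succ]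
          rfl
        rcases lt_or_ge j.1 (i0.1+1) with h2 | h2
        · -- j.1 = i0.1
          have hji : j.1 = i0.1 := by omega
          have he : e' j = m1 := by simp only [he']; erw [dif_neg (by omega), dif_pos hji]
          rw [he, hm1,
            hv'A j.castSucc (by simp only [Fin.coe_castSucc]; omega),
            hv'B j.succ (by simp only [Fin.val_succ]; omega)]
          have : V j.castSucc.1 = v i0.castSucc := by
            rw [hVeq _ (by simp only [Fin.coe_castSucc]; omega)]
            congr 1
            exact Fin.ext (by simp only [Fin.coe_castSucc]; omega)
          rw [this]
          rfl
        rcases lt_or_ge j.1 (i0.1+2) with h3 | h3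
        · -- j.1 = i0.1 + 1
          have hji : j.1 = i0.1 + 1 := by omega
          have he : e' j = m2 := by
            simp only [he']; erw [dif_neg (by omega), dif_neg (by omega), dif_pos hji]
          rw [he, hm2,
            hv'B j.castSucc (by simp only [Fin.coe_castSucc]; omega),
            hv'C j.succ (by simp only [Fin.val_succ]; omega)]
          have : V (j.succ.1 - 1) = v i0.succ := by
            rw [hVeq _ (by simp only [Fin.val_succ]; omega)]
            congr 1
            exact Fin.ext (by simp only [Fin.val_succ]; omega)
          rw [this]
          rfl
        · -- j.1 ≥ i0.1 + 2
          have he : e' j = .inl ⟨E (j.1-1), hneE (j.1-1) (by omega) (by omega)⟩ := by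
            simp only [he']; erw [dif_neg (by omega), dif_neg (by omega), dif_neg (by omega)]
          rw [he]
          show (G.ends (E (j.1-1))).map some = _
          rw [hEnds (j.1-1) (by omega), Sym2.map_pair_eq,
            hv'C j.castSucc (by simp only [Fin.coe_castSucc]; omega),
            hv'C j.succ (by simp only [Fin.val_succ]; omega)]
          rw [show ((j.castSucc : ℕ) - 1) = j.1 - 1 by simp only [Fin.coe_castSucc],
            show ((j.succ : ℕ) - 1) = j.1 - 1 + 1 by simp only [Fin.val_succ]; omega]
          rfl)
      (by -- mono
        intro a b hab
        rw [Fin.le_def] at hab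
        rcases le_or_gt a.1 i0.1 with h1 | h1 <;> rcases le_or_gt b.1 i0.1 with h2 | h2
        · rw [hlam_le a h1, hlam_le b h2]; exact hmono' _ _ hab (by omega)
        · rw [hlam_le a h1, hlam_gt b h2]
          exact hmono' _ _ (by omega) (by have := b.isLt; omega)
        · omega
        · rw [hlam_gt a h1, hlam_gt b h2]
          exact hmono' _ _ (by omega) (by have := b.isLt; omega))
    refine ⟨Q, ?_⟩
    rw [hQ, htimes]
    rintro t ⟨j, rfl⟩
    rcases le_or_gt j.1 i0.1 with h1 | h1
    · exact ⟨⟨j.1, by omega⟩, by rw [hlam_le j h1, hEeq j.1 (by omega)]⟩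
    · exact ⟨⟨j.1 - 1, by have := j.isLt; omega⟩,
        by rw [hlam_gt j h1, hEeq (j.1-1) (by have := j.isLt; omega)]⟩
  · -- no D edge
    obtain ⟨Q, hQ⟩ := tpath_mk' (lam := lam') (s := (some s : Option G.V)) (z := (some z : Option G.V)) (fun i => some (v i))
      (fun i => (Sum.inl ⟨e i, fun h => hDe ⟨i, h⟩⟩ : (G.msubdiv x y).E))
      (fun a b hab => hinj (Option.some_injective _ hab))
      (congrArg some h0) (congrArg some hl)
      (fun i => by
        show (G.ends (e i)).map some = _
        rw [hends i, Sym2.map_pair_eq]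
        rfl)
      (fun i j hij => by rw [hkeep, hkeep]; exact hmono i j hij)
    refine ⟨Q, ?_⟩
    rw [hQ, htimes]
    rintro t ⟨i, rfl⟩
    exact ⟨i, (hkeep _ _).symm⟩

end Transfer
def msubdivToG {G : Multigraph} {x y : G.V} : (G.msubdiv x y).E → G.E
  | Sum.inl f => f.1
  | Sum.inr p => p.1.1

section TransferA
variable {G : Multigraph} {x y : G.V} {lam : G.E → ℕ} {lam' : (G.msubdiv x y).E → ℕ}

set_option maxHeartbeats 2000000 in
lemma transferA
    (hkeep : ∀ (e : G.E) (h : G.ends e ≠ s(x, y)), lam' (Sum.inl ⟨e, h⟩) = lam e)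
    (hD : ∀ b : Bool,
      Set.range (fun d : {e : G.E // G.ends e = s(x, y)} => lam' (Sum.inr (d, b)))
        = Set.range (fun d : {e : G.E // G.ends e = s(x, y)} => lam d.1))
    (s z : G.V) (Q : TPath (G.msubdiv x y) lam' (some s) (some z)) :
    ∃ P : TPath G lam s z, P.times ⊆ Q.times := by
  classical
  obtain ⟨n, v, e, hinj, h0, hl, hends, hmono, htimes⟩ := tpath_spec Q
  set w : Fin (n+1) → G.V := fun k => (v k).getD s with hwdef
  have hw : ∀ k : Fin (n+1), v k ≠ none → v k = some (w k) := by
    intro k hk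
    cases hv : v k with
    | none => exact absurd hv hk
    | some a => simp only [hwdef, hv, Option.getD_some]; rfl
  have hGood : ∀ j : Fin n, v j.castSucc ≠ none → v j.succ ≠ none →
      lam (msubdivToG (e j)) = lam' (e j) ∧
      G.ends (msubdivToG (e j)) = s(w j.castSucc, w j.succ) := by
    intro j hc hs
    have hj := hends j
    match hc2 : e j with
    | Sum.inl f =>
        rw [hc2] at hj
        have hj2 : Sym2.map some (G.ends f.1) = s(v j.castSucc, v j.succ) := hj
        rw [hw _ hc, hw _ hs] at hj2
        constructor
        · exact (hkeep f.1 f.2).symm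
        · show G.ends f.1 = s(w j.castSucc, w j.succ)
          refine Sym2.map.injective (Option.some_injective G.V) ?_
          rw [hj2, Sym2.map_pair_eq]
          rfl
    | Sum.inr p =>
        exfalso
        obtain ⟨d, b⟩ := p
        rw [hc2] at hj
        cases b with
        | true =>
            have h2 : s(some x, (none : Option G.V)) = s(v j.castSucc, v j.succ) := hj
            rcases Sym2.eq_iff.1 h2 with ⟨_, h4⟩ | ⟨_, h4⟩
            · exact hs h4.symm
            · exact hc h4.symm
        | false =>
            have h2 : s((none : Option G.V), some y) = s(v j.castSucc, v j.succ) := hj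
            rcases Sym2.eq_iff.1 h2 with ⟨h3, _⟩ | ⟨h3, _⟩
            · exact hc h3.symm
            · exact hs h3.symm
  by_cases hN : ∃ k : Fin (n+1), v k = none
  · -- path passes through the subdivision vertex
    obtain ⟨j0, hj0⟩ := hN
    have hp1 : 1 ≤ j0.1 := by
      rcases Nat.eq_zero_or_pos j0.1 with h | h
      · exfalso
        have : j0 = 0 := Fin.ext h
        rw [this, h0] at hj0
        exact Option.some_ne_none _ hj0
      · exact h
    have hp2 : j0.1 < n := by
      rcases lt_or_eq_of_le (Nat.lt_succ_iff.1 j0.isLt) with h | h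
      · exact h
      · exfalso
        have : j0 = Fin.last n := Fin.ext h
        rw [this, hl] at hj0
        exact Option.some_ne_none _ hj0
    obtain ⟨m, rfl⟩ : ∃ m, n = m + 2 := ⟨n - 2, by omega⟩
    set p := j0.1 with hpdef
    have hnone : ∀ (i : ℕ) (h : i < m+3), i ≠ p → v ⟨i, h⟩ ≠ none := by
      intro i h hip hc
      exact hip (by simpa [hpdef] using congrArg Fin.val (hinj (hc.trans hj0.symm)))
    have hvW : ∀ (i : ℕ) (h : i < m+3), i ≠ p → v ⟨i, h⟩ = some (w ⟨i, h⟩) :=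
      fun i h hip => hw _ (hnone i h hip)
    -- the two middle edges
    have hq1 : p - 1 < m + 2 := by omega
    have hq2 : p - 1 < m + 3 := by omega
    have hq3 : p < m + 2 := by omega
    have hq4 : p + 1 < m + 3 := by omega
    have hvsA : v ((⟨p-1, hq1⟩ : Fin (m+2)).succ) = none :=
      (congrArg v (show (⟨p-1, hq1⟩ : Fin (m+2)).succ = j0 from
        Fin.ext (by simp only [Fin.val_succ]; omega))).trans hj0
    have hvsB : v ((⟨p, hq3⟩ : Fin (m+2)).castSucc) = none :=
      (congrArg v (show (⟨p, hq3⟩ : Fin (m+2)).castSucc = j0 from Fin.ext rfl)).trans hj0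
    have hendsA : (G.msubdiv x y).ends (e ⟨p-1, hq1⟩) = s(v ⟨p-1, hq2⟩, none) := by
      refine (hends ⟨p-1, hq1⟩).trans ?_
      rw [hvsA]
      rfl
    have hendsB : (G.msubdiv x y).ends (e ⟨p, hq3⟩) = s(none, v ⟨p+1, hq4⟩) := by
      refine (hends ⟨p, hq3⟩).trans ?_
      rw [hvsB]
      rfl
    -- e ⟨p-1⟩ is an inr edge
    have hinrA : ∃ (dA : {e : G.E // G.ends e = s(x,y)}) (bA : Bool),
        e ⟨p-1, hq1⟩ = Sum.inr (dA, bA) := by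
      match hc2 : e ⟨p-1, hq1⟩ with
      | Sum.inl f =>
          exfalso
          rw [hc2] at hendsA
          have h2 : Sym2.map some (G.ends f.1) = s(v ⟨p-1, hq2⟩, none) := hendsA
          have : (none : Option G.V) ∈ Sym2.map some (G.ends f.1) := by
            rw [h2]; exact Sym2.mem_mk_right _ _
          obtain ⟨a, _, ha⟩ := Sym2.mem_map.1 this
          exact Option.some_ne_none _ ha
      | Sum.inr (dA, bA) => exact ⟨dA, bA, rfl⟩
    have hinrB : ∃ (dB : {e : G.E // G.ends e = s(x,y)}) (bB : Bool),
        e ⟨p, hq3⟩ = Sum.inr (dB, bB) := by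
      match hc2 : e ⟨p, hq3⟩ with
      | Sum.inl f =>
          exfalso
          rw [hc2] at hendsB
          have h2 : Sym2.map some (G.ends f.1) = s(none, v ⟨p+1, hq4⟩) := hendsB
          have : (none : Option G.V) ∈ Sym2.map some (G.ends f.1) := by
            rw [h2]; exact Sym2.mem_mk_left _ _
          obtain ⟨a, _, ha⟩ := Sym2.mem_map.1 this
          exact Option.some_ne_none _ ha
      | Sum.inr (dB, bB) => exact ⟨dB, bB, rfl⟩
    obtain ⟨dA, bA, hcA⟩ := hinrA
    obtain ⟨dB, bB, hcB⟩ := hinrB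
    -- endpoints
    have hvA : v ⟨p-1, hq2⟩ = (if bA then some x else some y) := by
      rw [hcA] at hendsA
      cases bA with
      | true =>
          have h2 : s(some x, (none : Option G.V)) = s(v ⟨p-1, hq2⟩, none) := hendsA
          rcases Sym2.eq_iff.1 h2 with ⟨h3, _⟩ | ⟨h3, _⟩
          · simp [h3.symm]; rfl
          · exact absurd h3 (Option.some_ne_none _)
      | false =>
          have h2 : s((none : Option G.V), some y) = s(v ⟨p-1, hq2⟩, none) := hendsA
          rcases Sym2.eq_iff.1 h2 with ⟨_, h4⟩ | ⟨_, h4⟩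
          · exact absurd h4 (Option.some_ne_none _)
          · simp [h4.symm]; rfl
    have hvB : v ⟨p+1, hq4⟩ = (if bB then some x else some y) := by
      rw [hcB] at hendsB
      cases bB with
      | true =>
          have h2 : s(some x, (none : Option G.V)) = s((none : Option G.V), v ⟨p+1, hq4⟩) := hendsB
          rcases Sym2.eq_iff.1 h2 with ⟨h3, _⟩ | ⟨h4, _⟩
          · exact absurd h3 (Option.some_ne_none _)
          · simp [h4.symm]; rfl
      | false =>
          have h2 : s((none : Option G.V), some y) = s((none : Option G.V), v ⟨p+1, hq4⟩) := hendsB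
          rcases Sym2.eq_iff.1 h2 with ⟨_, h4⟩ | ⟨_, h4⟩
          · simp [h4.symm]; rfl
          · exact absurd h4 (Option.some_ne_none _)
    have hABne : v ⟨p-1, hq2⟩ ≠ v ⟨p+1, hq4⟩ := by
      intro hc
      have := congrArg Fin.val (hinj hc)
      simp only at this
      omega
    have hvv : (v ⟨p-1, hq2⟩ = some x ∧ v ⟨p+1, hq4⟩ = some y) ∨
        (v ⟨p-1, hq2⟩ = some y ∧ v ⟨p+1, hq4⟩ = some x) := by
      cases bA <;> cases bB <;> simp only [↓reduceIte, Bool.false_eq_true] at hvA hvB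
      · exact absurd (hvA.trans hvB.symm) hABne
      · exact Or.inr ⟨hvA, hvB⟩
      · exact Or.inl ⟨hvA, hvB⟩
      · exact absurd (hvA.trans hvB.symm) hABne
    -- choose the replacement edge d with lam d = lam' (e ⟨p-1⟩)
    obtain ⟨d, hd⟩ : ∃ d : {e : G.E // G.ends e = s(x,y)},
        lam d.1 = lam' (e ⟨p-1, hq1⟩) := by
      have : lam' (e ⟨p-1, hq1⟩) ∈
          Set.range (fun d : {e : G.E // G.ends e = s(x, y)} => lam' (Sum.inr (d, bA))) := by
        rw [hcA]; exact ⟨dA, rfl⟩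
      rw [hD bA] at this
      obtain ⟨d, hd⟩ := this
      exact ⟨d, hd⟩
    -- index helpers
    set W : ℕ → G.V := fun i => w ⟨min i (m+2), by omega⟩ with hWdef
    have hWeq : ∀ (i : ℕ) (h : i < m+3), W i = w ⟨i, h⟩ := by
      intro i h; simp only [hWdef]; congr 1; exact Fin.ext (by simp; omega)
    set F : ℕ → (G.msubdiv x y).E := fun i => e ⟨min i (m+1), by omega⟩ with hFdef
    have hFeq : ∀ (i : ℕ) (h : i < m+2), F i = e ⟨i, h⟩ := by
      intro i h; simp only [hFdef]; congr 1; exact Fin.ext (by simp; omega)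
    set v'' : Fin (m+2) → G.V := fun j => W (if j.1 < p then j.1 else j.1 + 1) with hv''
    set e'' : Fin (m+1) → G.E := fun j =>
      if j.1 < p - 1 then msubdivToG (F j.1)
      else if j.1 = p - 1 then d.1
      else msubdivToG (F (j.1 + 1)) with he''
    -- facts about edges away from the middle
    have hGood' : ∀ (k : ℕ) (h : k < m+2), k ≠ p - 1 → k ≠ p →
        lam (msubdivToG (F k)) = lam' (F k) ∧
        G.ends (msubdivToG (F k)) = s(W k, W (k+1)) := by
      intro k h hk1 hk2
      rw [hFeq k h, hWeq k (by omega), hWeq (k+1) (by omega)]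
      exact hGood ⟨k, h⟩ (hnone k (by omega) (by omega)) (hnone (k+1) (by omega) (by omega))
    have hlamA : ∀ j : Fin (m+1), j.1 ≤ p - 1 →
        lam (e'' j) = lam' (e ⟨j.1, by have := j.isLt; omega⟩) := by
      intro j hj
      have hjlt := j.isLt
      simp only [he'']
      rcases lt_or_eq_of_le hj with h | h
      · rw [if_pos h, ← hFeq j.1 (by omega)]
        exact (hGood' j.1 (by omega) (by omega) (by omega)).1
      · rw [if_neg (by omega), if_pos h]
        rw [hd]
        have h9 : (⟨p-1, hq1⟩ : Fin (m+2)) = ⟨j.1, by omega⟩ := Fin.ext (by show p-1 = j.1; omega)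
        rw [h9]
    have hlamB : ∀ j : Fin (m+1), p - 1 < j.1 →
        lam (e'' j) = lam' (e ⟨j.1 + 1, by have := j.isLt; omega⟩) := by
      intro j hj
      have hjlt := j.isLt
      simp only [he'']
      rw [if_neg (by omega), if_neg (by omega), ← hFeq (j.1+1) (by omega)]
      exact (hGood' (j.1+1) (by omega) (by omega) (by omega)).1
    have hmono'' : ∀ a b : Fin (m+2), a.1 ≤ b.1 → lam' (e a) ≤ lam' (e b) := by
      intro a b hab
      exact hmono a b (by rwa [Fin.le_def])
    obtain ⟨P, hP⟩ := tpath_mk' (lam := lam) (s := s) (z := z) v'' e''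
      (by -- injective
        intro a b hab
        have ha2 := a.isLt; have hb2 := b.isLt
        simp only [hv''] at hab
        have h1 : ∀ i : ℕ, i < m+2 → (if i < p then i else i + 1) ≠ p := by
          intro i hi; split <;> omega
        have h2 : ∀ i : ℕ, i < m+2 → (if i < p then i else i + 1) < m+3 := by
          intro i hi; split <;> omega
        rw [hWeq _ (h2 a.1 ha2), hWeq _ (h2 b.1 hb2)] at hab
        have h3 := hvW _ (h2 a.1 ha2) (h1 a.1 ha2)
        have h4 := hvW _ (h2 b.1 hb2) (h1 b.1 hb2)
        have h5 : v ⟨if a.1 < p then a.1 else a.1+1, h2 a.1 ha2⟩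
            = v ⟨if b.1 < p then b.1 else b.1+1, h2 b.1 hb2⟩ := by
          rw [h3, h4, hab]
        have h6 := congrArg Fin.val (hinj h5)
        simp only at h6
        exact Fin.ext (by split_ifs at h6 <;> omega))
      (by -- v'' 0 = s
        simp only [hv'']
        rw [if_pos (by simp only [Fin.val_zero]; omega), hWeq _ (by simp only [Fin.val_zero]; omega)]
        have := hvW ((0 : Fin (m+2)) : ℕ) (by simp only [Fin.val_zero]; omega)
          (by simp only [Fin.val_zero]; omega)
        have h7 : v ⟨((0 : Fin (m+2)) : ℕ), by omega⟩ = some s := by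
          rw [show (⟨((0 : Fin (m+2)) : ℕ), by omega⟩ : Fin (m+3)) = 0 from Fin.ext (by simp), h0]
        exact Option.some_injective _ ((this.symm).trans h7)
        )
      (by -- v'' last = z
        simp only [hv'']
        rw [if_neg (by simp only [Fin.val_last]; omega),
          hWeq _ (by simp only [Fin.val_last]; omega)]
        have := hvW ((Fin.last (m+1) : Fin (m+2)) + 1 : ℕ) (by simp only [Fin.val_last]; omega)
          (by simp only [Fin.val_last]; omega)
        have h7 : v ⟨((Fin.last (m+1) : Fin (m+2)) + 1 : ℕ), by omega⟩ = some z := by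
          rw [show (⟨((Fin.last (m+1) : Fin (m+2)) + 1 : ℕ), by omega⟩ : Fin (m+3))
              = Fin.last (m+2) from Fin.ext (by simp), hl]
        exact Option.some_injective _ ((this.symm).trans h7))
      (by -- ends
        intro j
        have hjlt := j.isLt
        rcases lt_or_ge j.1 (p-1) with h1 | h1
        · have he : e'' j = msubdivToG (F j.1) := by simp only [he'']; rw [if_pos h1]
          rw [he, (hGood' j.1 (by omega) (by omega) (by omega)).2]
          simp only [hv'', Fin.coe_castSucc, Fin.val_succ]
          rw [if_pos (by omega), if_pos (by omega)]
        rcases eq_or_lt_of_le h1 with h2 | h2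
        · -- middle
          have he : e'' j = d.1 := by
            simp only [he'']; rw [if_neg (by omega), if_pos h2.symm]
          rw [he, d.2]
          simp only [hv'', Fin.coe_castSucc, Fin.val_succ]
          rw [if_pos (by omega), if_neg (by omega),
            hWeq _ (by omega), hWeq _ (by omega)]
          have hwA : w ⟨j.1, by omega⟩ = (v ⟨p-1, hq2⟩).getD s := by
            have h8 : (⟨j.1, by omega⟩ : Fin (m+3)) = ⟨p-1, hq2⟩ :=
              Fin.ext (by show j.1 = p-1; omega)
            rw [h8]
          have hwB : w ⟨j.1+1+1, by omega⟩ = (v ⟨p+1, hq4⟩).getD s := by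
            have h8 : (⟨j.1+1+1, by omega⟩ : Fin (m+3)) = ⟨p+1, hq4⟩ :=
              Fin.ext (by show j.1+1+1 = p+1; omega)
            rw [h8]
          rcases hvv with ⟨hA, hB⟩ | ⟨hA, hB⟩
          · rw [hwA, hwB, hA, hB]; rfl
          · rw [hwA, hwB, hA, hB]
            exact Sym2.eq_swap
        · -- after the middle
          have he : e'' j = msubdivToG (F (j.1+1)) := by
            simp only [he'']; rw [if_neg (by omega), if_neg (by omega)]
          rw [he, (hGood' (j.1+1) (by omega) (by omega) (by omega)).2]
          simp only [hv'', Fin.coe_castSucc, Fin.val_succ]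
          rw [if_neg (by omega), if_neg (by omega)])
      (by -- mono
        intro a b hab
        rw [Fin.le_def] at hab
        rcases le_or_gt a.1 (p-1) with h1 | h1 <;> rcases le_or_gt b.1 (p-1) with h2 | h2
        · rw [hlamA a h1, hlamA b h2]; exact hmono'' _ _ (by simp; omega)
        · rw [hlamA a h1, hlamB b h2]; exact hmono'' _ _ (by simp; omega)
        · omega
        · rw [hlamB a h1, hlamB b h2]; exact hmono'' _ _ (by simp; omega))
    refine ⟨P, ?_⟩
    rw [hP, htimes]
    rintro t ⟨j, rfl⟩
    rcases le_or_gt j.1 (p-1) with h1 | h1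
    · exact ⟨⟨j.1, by have := j.isLt; omega⟩, (hlamA j h1).symm⟩
    · exact ⟨⟨j.1+1, by have := j.isLt; omega⟩, (hlamB j h1).symm⟩
  · -- path avoids the subdivision vertex
    have hN' : ∀ k : Fin (n+1), v k ≠ none := fun k h => hN ⟨k, h⟩
    obtain ⟨P, hP⟩ := tpath_mk' (lam := lam) (s := s) (z := z) w (fun j => msubdivToG (e j))
      (by intro a b hab
          have h1 := hw a (hN' a)
          have h2 := hw b (hN' b)
          exact hinj (by rw [h1, h2, hab]))
      (Option.some_injective _ ((hw 0 (hN' 0)).symm.trans h0))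
      (Option.some_injective _ ((hw _ (hN' _)).symm.trans hl))
      (fun j => (hGood j (hN' _) (hN' _)).2)
      (fun i j hij => by
        rw [(hGood i (hN' _) (hN' _)).1, (hGood j (hN' _) (hN' _)).1]
        exact hmono i j hij)
    refine ⟨P, ?_⟩
    rw [hP, htimes]
    rintro t ⟨j, rfl⟩
    exact ⟨j, ((hGood j (hN' _) (hN' _)).1).symm⟩

end TransferA

/-- m-subdividing a multiedge `xy`, with any timefunction `λ'` agreeing with
`λ` outside `D` and whose label sets on `D_x` and `D_y` both equal `λ(D)`, preserves both
`maxD` and `minC`. -/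
theorem stmt2 (G : Multigraph) (x y : G.V) (hxy : ∃ e, G.ends e = s(x, y))
    (lam : G.E → ℕ) (hpos : ∀ e, 0 < lam e)
    (lam' : (G.msubdiv x y).E → ℕ) (hpos' : ∀ e, 0 < lam' e)
    (hkeep : ∀ (e : G.E) (h : G.ends e ≠ s(x, y)), lam' (Sum.inl ⟨e, h⟩) = lam e)
    (hDx : Set.range (fun d : {e : G.E // G.ends e = s(x, y)} => lam' (Sum.inr (d, true)))
        = Set.range (fun d : {e : G.E // G.ends e = s(x, y)} => lam d.1))
    (hDy : Set.range (fun d : {e : G.E // G.ends e = s(x, y)} => lam' (Sum.inr (d, false)))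
        = Set.range (fun d : {e : G.E // G.ends e = s(x, y)} => lam d.1)) :
    ∀ s z : G.V, s ≠ z →
      maxD G lam s z = maxD (G.msubdiv x y) lam' (some s) (some z) ∧
      minC G lam s z = minC (G.msubdiv x y) lam' (some s) (some z) := by
  intro s z hsz
  have hsz' : (some s : Option G.V) ≠ some z := fun h => hsz (Option.some_injective _ h)
  have hD : ∀ b : Bool,
      Set.range (fun d : {e : G.E // G.ends e = s(x, y)} => lam' (Sum.inr (d, b)))
        = Set.range (fun d : {e : G.E // G.ends e = s(x, y)} => lam d.1) := by
    intro b; cases b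
    · exact hDy
    · exact hDx
  have h1 := transfer_le hsz hsz' (transferB hkeep hD s z)
  have h2 := transfer_le hsz' hsz (transferA hkeep hD s z)
  exact ⟨le_antisymm h1.1 h2.1, le_antisymm h1.2 h2.2⟩
end
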